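/- Consider the Bell operator B = (A₁⁰+A₁¹)⊗(A₂¹ + A₃⁰A₄¹) + (A₁⁰−A₁¹)⊗(A₂⁰A₃¹ + A₂⁰A₄⁰) where each A_j^x is a ±1-valued observable (Hermitian with A² = I). For deterministic local assignments a_j^x ∈ {−1,+1}, the classical value (a₁⁰+a₁¹)(a₂¹ + a₃⁰a₄¹) + (a₁⁰−a₁¹)(a₂⁰a₃¹ + a₂⁰a₄⁰) is at most 4; and with the quantum choice A₁⁰ = (X+Z)/√2, A₁¹ = (X−Z)/√2 on qubit 1 and A_i⁰ = X_i, A_i¹ = Z_i for i = 2,3,4, the expectation of B in the 4-qubit cluster state |Cluster₄⟩ equals 4√2. -/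

import Mathlib

open scoped Matrix ComplexOrder

noncomputable section

namespace Stmt18

def X : Matrix (Fin 2) (Fin 2) ℂ := !![0, 1; 1, 0]

def Z : Matrix (Fin 2) (Fin 2) ℂ := !![1, 0; 0, -1]

/-- Tensor product of four single-qubit operators, as a matrix on `Fin 4 → Fin 2`. -/
def kron4 (M : Fin 4 → Matrix (Fin 2) (Fin 2) ℂ) :
    Matrix (Fin 4 → Fin 2) (Fin 4 → Fin 2) ℂ :=
  fun f g => ∏ i, M i (f i) (g i)

/-- `A₁⁰ = (X+Z)/√2`. -/
def A10 : Matrix (Fin 2) (Fin 2) ℂ := (((Real.sqrt 2)⁻¹ : ℝ) : ℂ) • (X + Z)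

/-- `A₁¹ = (X−Z)/√2`. -/
def A11 : Matrix (Fin 2) (Fin 2) ℂ := (((Real.sqrt 2)⁻¹ : ℝ) : ℂ) • (X - Z)

/-- The Bell operator `B = (A₁⁰+A₁¹)⊗(A₂¹ + A₃⁰A₄¹) + (A₁⁰−A₁¹)⊗(A₂⁰A₃¹ + A₂⁰A₄⁰)` with
the quantum choice `A_i⁰ = X_i`, `A_i¹ = Z_i` for `i = 2,3,4`. -/
def BellOp : Matrix (Fin 4 → Fin 2) (Fin 4 → Fin 2) ℂ :=
  kron4 ![A10 + A11, Z, 1, 1] + kron4 ![A10 + A11, 1, X, Z] +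
  kron4 ![A10 - A11, X, Z, 1] + kron4 ![A10 - A11, X, 1, X]

/-- Stabilizers of the 4-qubit cluster state on the line graph 1–2–3–4. -/
def g1 : Matrix (Fin 4 → Fin 2) (Fin 4 → Fin 2) ℂ := kron4 ![X, Z, 1, 1]
def g2 : Matrix (Fin 4 → Fin 2) (Fin 4 → Fin 2) ℂ := kron4 ![Z, X, Z, 1]
def g3 : Matrix (Fin 4 → Fin 2) (Fin 4 → Fin 2) ℂ := kron4 ![1, Z, X, Z]
def g4 : Matrix (Fin 4 → Fin 2) (Fin 4 → Fin 2) ℂ := kron4 ![1, 1, Z, X]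

lemma kron4_mul (M N : Fin 4 → Matrix (Fin 2) (Fin 2) ℂ) :
    kron4 M * kron4 N = kron4 (fun i => M i * N i) := by
  ext f g
  simp only [Matrix.mul_apply, kron4]
  rw [← Fintype.piFinset_univ]
  simp only [← Finset.prod_mul_distrib, Matrix.mul_apply]
  rw [Finset.prod_univ_sum]

lemma ZZ : Z * Z = 1 := by
  ext i j; fin_cases i <;> fin_cases j <;>
    simp [Z, Matrix.mul_apply, Fin.sum_univ_two, Matrix.one_apply]

lemma g13 : g1 * g3 = kron4 ![X, 1, X, Z] := by
  rw [g1, g3, kron4_mul]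
  have h : (fun i => ![X, Z, 1, 1] i * ![1, Z, X, Z] i) = ![X, 1, X, Z] := by
    funext i
    fin_cases i <;> simp [ZZ]
  rw [h]

lemma g24 : g2 * g4 = kron4 ![Z, X, 1, X] := by
  rw [g2, g4, kron4_mul]
  have h : (fun i => ![Z, X, Z, 1] i * ![1, 1, Z, X] i) = ![Z, X, 1, X] := by
    funext i
    fin_cases i <;> simp [ZZ]
  rw [h]

lemma key : ((Real.sqrt 2)⁻¹ : ℝ) * 2 = Real.sqrt 2 := by
  have h : Real.sqrt 2 * Real.sqrt 2 = 2 := Real.mul_self_sqrt (by norm_num)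
  have h0 : Real.sqrt 2 ≠ 0 := by positivity
  field_simp
  rw [sq, h]

lemma hsum : A10 + A11 = ((Real.sqrt 2 : ℝ) : ℂ) • X := by
  rw [A10, A11, ← smul_add]
  have h : X + Z + (X - Z) = (2 : ℂ) • X := by module
  rw [h, smul_smul]
  congr 1
  exact_mod_cast key

lemma hdiff : A10 - A11 = ((Real.sqrt 2 : ℝ) : ℂ) • Z := by
  rw [A10, A11, ← smul_sub]
  have h : X + Z - (X - Z) = (2 : ℂ) • Z := by module
  rw [h, smul_smul]
  congr 1
  exact_mod_cast key

lemma kron4_smul (c : ℂ) (M M1 M2 M3 : Matrix (Fin 2) (Fin 2) ℂ) :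
    kron4 ![c • M, M1, M2, M3] = c • kron4 ![M, M1, M2, M3] := by
  ext f g
  simp only [kron4, Fin.prod_univ_four, Matrix.cons_val_zero, Matrix.cons_val_one,
    Matrix.head_cons, Matrix.cons_val_two, Matrix.cons_val_three, Matrix.tail_cons,
    Matrix.smul_apply, smul_eq_mul]
  ring

/-- the classical value of the Bell expression is at most 4 for every
deterministic local ±1-assignment, while the quantum expectation of the Bell operator in
the 4-qubit cluster state (the normalized common +1-eigenvector of the stabilizers)
equals `4√2`. -/
theorem cluster_bell_inequality :
    (∀ a : Fin 4 → Fin 2 → ℝ, (∀ j x, a j x = 1 ∨ a j x = -1) →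
      (a 0 0 + a 0 1) * (a 1 1 + a 2 0 * a 3 1) +
      (a 0 0 - a 0 1) * (a 1 0 * a 2 1 + a 1 0 * a 3 0) ≤ 4) ∧
    (∀ v : (Fin 4 → Fin 2) → ℂ,
      star v ⬝ᵥ v = 1 →
      g1 *ᵥ v = v → g2 *ᵥ v = v → g3 *ᵥ v = v → g4 *ᵥ v = v →
      star v ⬝ᵥ (BellOp *ᵥ v) = ((4 * Real.sqrt 2 : ℝ) : ℂ)) := by
  constructor
  · intro a ha
    rcases ha 0 0 with h00 | h00 <;> rcases ha 0 1 with h01 | h01 <;>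
      rcases ha 1 0 with h10 | h10 <;> rcases ha 1 1 with h11 | h11 <;>
      rcases ha 2 0 with h20 | h20 <;> rcases ha 2 1 with h21 | h21 <;>
      rcases ha 3 0 with h30 | h30 <;> rcases ha 3 1 with h31 | h31 <;>
      rw [h00, h01, h10, h11, h20, h21, h30, h31] <;> norm_num
  · intro v hv h1 h2 h3 h4
    have e13 : kron4 ![X, 1, X, Z] *ᵥ v = v := by
      rw [← g13, ← Matrix.mulVec_mulVec, h3, h1]
    have e24 : kron4 ![Z, X, 1, X] *ᵥ v = v := by
      rw [← g24, ← Matrix.mulVec_mulVec, h4, h2]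
    have hB : BellOp = ((Real.sqrt 2 : ℝ) : ℂ) •
        (g1 + kron4 ![X, 1, X, Z] + g2 + kron4 ![Z, X, 1, X]) := by
      rw [BellOp, hsum, hdiff, kron4_smul, kron4_smul, kron4_smul, kron4_smul, g1, g2]
      module
    rw [hB, Matrix.smul_mulVec, Matrix.add_mulVec, Matrix.add_mulVec, Matrix.add_mulVec,
      h1, h2, e13, e24]
    rw [dotProduct_smul]
    simp only [dotProduct_add, hv]
    push_cast [smul_eq_mul]
    ring
end Stmt18

end
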